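/- Let (Ω^{p,g}, d_H, δ) be a bicomplex with anticommuting differentials d_H (horizontal, form degree +1) and δ (Koszul-Tate, ghost number +1), with δ acyclic in negative ghost numbers (H^g(δ) = 0 for g < 0) and d_H acyclic in form degrees 0 < p < n (after removing constants). Then the map f([a]) = [j] sending a ghost-number −1, form-degree n cocycle of δ modulo d_H (i.e., δa + d_H j = 0) to its descent partner j is a well-defined isomorphism H^{-1,n}(δ|d_H) ≅ H^{0,n-1}(d_H|δ). -/
import Mathlib


/-!
STATEMENT 11.  `(Ω^{g,p}, d_H, δ)` is a bicomplex of abelian groups with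
anticommuting differentials: `d_H` raises the form degree `p` by one, `δ`
(Koszul–Tate) raises the ghost number `g` by one.  `δ` is acyclic in negative
ghost numbers (`H^g(δ) = 0` for `g < 0`) and `d_H` is acyclic in form degrees
`0 < p < n` (there are no constants there).  Ghost numbers `-2, -1, 0` are
written `γ, γ+1, γ+1+1` with `γ = -2`, and form degrees `n-2, n-1, n` are
written `p₀, p₀+1, p₀+1+1` with `0 < p₀+1` (so `n-1` is an intermediate
degree).  The map `f([a]) = [j]` sending a cocycle `a` (i.e.
`δ a + d_H j = 0`, `a` of ghost number `-1` and form degree `n`) to its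
descent partner `j` is a well-defined isomorphism
`H^{-1,n}(δ|d_H) ≅ H^{0,n-1}(d_H|δ)`.  This is expressed without quotient
types by: (i) every class in the target has a preimage (surjectivity), and
(ii) two cocycle pairs `(a,j)`, `(a',j')` differ by a coboundary on the
`a`-side iff they do on the `j`-side (well-definedness and injectivity).
-/
theorem stmt11
    (Ω : ℤ → ℤ → Type) [∀ g p, AddCommGroup (Ω g p)]
    (dH : ∀ g p, Ω g p →+ Ω g (p + 1))
    (δ : ∀ g p, Ω g p →+ Ω (g + 1) p)
    (hdd : ∀ g p (x : Ω g p), dH g (p + 1) (dH g p x) = 0)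
    (hδδ : ∀ g p (x : Ω g p), δ (g + 1) p (δ g p x) = 0)
    (hanti : ∀ g p (x : Ω g p),
      δ g (p + 1) (dH g p x) + dH (g + 1) p (δ g p x) = 0)
    (γ p₀ : ℤ) (hγ : γ = -2) (hp : 0 < p₀ + 1)
    (hδacyc : ∀ g p, g + 1 < 0 → ∀ x : Ω (g + 1) p,
      δ (g + 1) p x = 0 → ∃ y : Ω g p, x = δ g p y)
    (hdHacyc : ∀ g p, 0 < p + 1 → p + 1 < p₀ + 1 + 1 → ∀ x : Ω g (p + 1),
      dH g (p + 1) x = 0 → ∃ y : Ω g p, x = dH g p y) :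
    -- surjectivity: every `d_H|δ`-cocycle `j` lifts to a pair `(a, j)`
    (∀ j : Ω (γ + 1 + 1) (p₀ + 1),
      (∃ b : Ω (γ + 1) (p₀ + 1 + 1),
        dH (γ + 1 + 1) (p₀ + 1) j = δ (γ + 1) (p₀ + 1 + 1) b) →
      ∃ a : Ω (γ + 1) (p₀ + 1 + 1),
        δ (γ + 1) (p₀ + 1 + 1) a + dH (γ + 1 + 1) (p₀ + 1) j = 0) ∧
    -- well-definedness and injectivity: `a - a'` is trivial iff `j - j'` is
    (∀ (a a' : Ω (γ + 1) (p₀ + 1 + 1)) (j j' : Ω (γ + 1 + 1) (p₀ + 1)),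
      δ (γ + 1) (p₀ + 1 + 1) a + dH (γ + 1 + 1) (p₀ + 1) j = 0 →
      δ (γ + 1) (p₀ + 1 + 1) a' + dH (γ + 1 + 1) (p₀ + 1) j' = 0 →
      ((∃ (m : Ω γ (p₀ + 1 + 1)) (m' : Ω (γ + 1) (p₀ + 1)),
          a - a' = δ γ (p₀ + 1 + 1) m + dH (γ + 1) (p₀ + 1) m') ↔
        (∃ (c : Ω (γ + 1 + 1) p₀) (c' : Ω (γ + 1) (p₀ + 1)),
          j - j' = dH (γ + 1 + 1) p₀ c + δ (γ + 1) (p₀ + 1) c'))) := by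
  refine ⟨?_, ?_⟩
  · rintro j ⟨b, hb⟩
    exact ⟨-b, by rw [map_neg, hb, neg_add_cancel]⟩
  · intro a a' j j' ha ha'
    have hsub : δ (γ + 1) (p₀ + 1 + 1) (a - a')
        + dH (γ + 1 + 1) (p₀ + 1) (j - j') = 0 := by
      rw [map_sub, map_sub]
      have : (δ (γ + 1) (p₀ + 1 + 1) a + dH (γ + 1 + 1) (p₀ + 1) j)
          - (δ (γ + 1) (p₀ + 1 + 1) a' + dH (γ + 1 + 1) (p₀ + 1) j') = 0 := by
        rw [ha, ha', sub_zero]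
      rw [← this]; abel
    constructor
    · rintro ⟨m, m', hm⟩
      have hanti' := hanti (γ + 1) (p₀ + 1) m'
      have hS : δ (γ + 1) (p₀ + 1 + 1) (a - a')
          = - dH (γ + 1 + 1) (p₀ + 1) (δ (γ + 1) (p₀ + 1) m') := by
        rw [hm, map_add, hδδ γ (p₀ + 1 + 1) m, zero_add, eq_neg_of_add_eq_zero_left hanti']
      have hkey : dH (γ + 1 + 1) (p₀ + 1) ((j - j') - δ (γ + 1) (p₀ + 1) m') = 0 := by
        rw [map_sub]
        have : dH (γ + 1 + 1) (p₀ + 1) (j - j')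
            = dH (γ + 1 + 1) (p₀ + 1) (δ (γ + 1) (p₀ + 1) m') := by
          have := eq_neg_of_add_eq_zero_right hsub
          rw [this, hS, neg_neg]
        rw [this, sub_self]
      obtain ⟨c, hc⟩ := hdHacyc (γ + 1 + 1) p₀ hp (by linarith) _ hkey
      exact ⟨c, m', by rw [← hc]; abel⟩
    · rintro ⟨c, c', hc⟩
      have hanti' := hanti (γ + 1) (p₀ + 1) c'
      have hD : dH (γ + 1 + 1) (p₀ + 1) (j - j')
          = - δ (γ + 1) (p₀ + 1 + 1) (dH (γ + 1) (p₀ + 1) c') := by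
        rw [hc, map_add, hdd (γ + 1 + 1) p₀ c, zero_add,
          eq_neg_of_add_eq_zero_right hanti']
      have hkey : δ (γ + 1) (p₀ + 1 + 1) ((a - a') - dH (γ + 1) (p₀ + 1) c') = 0 := by
        rw [map_sub]
        have : δ (γ + 1) (p₀ + 1 + 1) (a - a')
            = δ (γ + 1) (p₀ + 1 + 1) (dH (γ + 1) (p₀ + 1) c') := by
          have := eq_neg_of_add_eq_zero_left hsub
          rw [this, hD, neg_neg]
        rw [this, sub_self]
      obtain ⟨m, hm⟩ := hδacyc γ (p₀ + 1 + 1) (by omega) _ hkey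
      exact ⟨m, c', by rw [← hm]; abel⟩
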